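/- Let I = {X; f_{ij}, p_{ij}} be a bi-Lipschitz recurrent IFS satisfying the strong open set condition with open sets U_1,…,U_N. Then for each m ∈ ℕ there exists a recurrent IFS I^m = {X; g_w : w ∈ Ω_m} satisfying the strong separation condition, where g_w = f_w ∘ f_{σ^i} for w = (w_1,…,w_{m-1},i) ∈ Ω_m and suitable loops σ^i ∈ Ω* starting and ending at i with f_{σ^i}(E_i) ⊆ U_i; in particular, for distinct words w ≠ τ in Ω_m, the sets g_w(F^m_{w_m}) and g_τ(F^m_{τ_m}) are disjoint, and the limit set F^m of I^m is contained in E. -/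

import Mathlib

open scoped Classical BigOperators

def Adm {N : ℕ} (p : Fin N → Fin N → ℝ) {m : ℕ} (w : Fin (m + 1) → Fin N) : Prop :=
  ∀ i : Fin m, 0 < p (w i.castSucc) (w i.succ)

def fWord {N : ℕ} {V : Type*} (f : Fin N → Fin N → V → V) {m : ℕ}
    (w : Fin (m + 1) → Fin N) : V → V :=
  fun x => (List.ofFn (fun i : Fin m => f (w i.castSucc) (w i.succ))).foldr
    (fun g y => g y) x

variable {N : ℕ} {V : Type*} (f : Fin N → Fin N → V → V) {p : Fin N → Fin N → ℝ}
lemma fWord_zero (w : Fin 1 → Fin N) : fWord f w = id := by funext x; simp [fWord]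
lemma fWord_succ {m : ℕ} (w : Fin (m + 2) → Fin N) :
    fWord f w = f (w 0) (w 1) ∘ fWord f (w ∘ Fin.succ) := by
  funext x
  simp only [fWord, List.ofFn_succ, List.foldr_cons, Function.comp_apply, Fin.succ_castSucc,
    Fin.castSucc_zero, Fin.succ_zero_eq_one]
lemma cons_last {n : ℕ} (i : Fin N) (v : Fin (n + 1) → Fin N) :
    (Fin.cons i v : Fin (n + 2) → Fin N) (Fin.last (n + 1)) = v (Fin.last n) := by
  rw [← Fin.succ_last, Fin.cons_succ]
lemma fWord_cons {n : ℕ} (i : Fin N) (v : Fin (n + 1) → Fin N) :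
    fWord f (Fin.cons i v) = f i (v 0) ∘ fWord f v := by
  rw [fWord_succ]; congr 1
lemma snoc_zero' {n : ℕ} (w : Fin (n + 1) → Fin N) (k : Fin N) :
    (Fin.snoc w k : Fin (n + 2) → Fin N) 0 = w 0 := by
  rw [show (0 : Fin (n+2)) = Fin.castSucc 0 by simp, Fin.snoc_castSucc]
lemma fWord_snoc {n : ℕ} (w : Fin (n + 1) → Fin N) (k : Fin N) :
    fWord f (Fin.snoc w k) = fWord f w ∘ f (w (Fin.last n)) k := by
  induction n with
  | zero =>
      funext x
      rw [fWord_succ, fWord_zero, fWord_zero]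
      simp only [Function.comp_apply, id_eq]
      congr 1
  | succ n ih =>
      have htail : (Fin.snoc w k : Fin (n + 3) → Fin N) ∘ Fin.succ
          = Fin.snoc (w ∘ Fin.succ) k := by
        funext j
        induction j using Fin.lastCases with
        | last => simp [Fin.succ_last]
        | cast j => simp [Fin.succ_castSucc, -Fin.castSucc_succ]
      funext x
      rw [fWord_succ f (Fin.snoc w k), htail, Function.comp_apply, Function.comp_apply,
        ih, fWord_succ f w]
      simp only [Function.comp_apply]
      rw [Fin.succ_last]
      congr 1

lemma tail_last {m : ℕ} (w : Fin (m + 2) → Fin N) :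
    (w ∘ Fin.succ) (Fin.last m) = w (Fin.last (m + 1)) := by
  simp [Fin.succ_last]

lemma adm_tail {m : ℕ} {w : Fin (m + 2) → Fin N} (h : Adm p w) : Adm p (w ∘ Fin.succ) := by
  intro i
  simpa using h i.succ

lemma adm_cons {n : ℕ} {v : Fin (n + 1) → Fin N} (hv : Adm p v) {i : Fin N}
    (h : 0 < p i (v 0)) : Adm p (Fin.cons i v) := by
  intro k
  induction k using Fin.cases with
  | zero => simpa using h
  | succ k => simpa using hv k

lemma adm_snoc {n : ℕ} {w : Fin (n + 1) → Fin N} (hw : Adm p w) {k : Fin N}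
    (h : 0 < p (w (Fin.last n)) k) : Adm p (Fin.snoc w k) := by
  intro j
  induction j using Fin.lastCases with
  | last => simpa [Fin.succ_last, Fin.snoc_castSucc] using h
  | cast j => simpa [Fin.succ_castSucc, -Fin.castSucc_succ, Fin.snoc_castSucc] using hw j

lemma fWord_image_subset (A : Fin N → Set V)
    (hstep : ∀ i j, 0 < p i j → f i j '' A j ⊆ A i) :
    ∀ (m : ℕ) (w : Fin (m + 1) → Fin N), Adm p w →
      fWord f w '' A (w (Fin.last m)) ⊆ A (w 0) := by
  intro m
  induction m with
  | zero => intro w _; rw [fWord_zero]; simp [Fin.last]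
  | succ m ih =>
      intro w hw
      rw [fWord_succ, Set.image_comp, ← tail_last w]
      refine (Set.image_mono (ih _ (adm_tail hw))).trans ?_
      have h01 : 0 < p (w 0) (w 1) := by simpa using hw 0
      simpa using hstep (w 0) (w 1) h01

lemma fWord_injective (hinj : ∀ i j, 0 < p i j → Function.Injective (f i j)) :
    ∀ (m : ℕ) (w : Fin (m + 1) → Fin N), Adm p w → Function.Injective (fWord f w) := by
  intro m
  induction m with
  | zero => intro w _; rw [fWord_zero]; exact fun a b h => h
  | succ m ih =>
      intro w hw
      rw [fWord_succ]
      exact (hinj (w 0) (w 1) (by simpa using hw 0)).comp (ih _ (adm_tail hw))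

lemma fWord_continuous {X : Type*} [MetricSpace X] (g : Fin N → Fin N → X → X)
    (hcont : ∀ i j, 0 < p i j → Continuous (g i j)) :
    ∀ (m : ℕ) (w : Fin (m + 1) → Fin N), Adm p w → Continuous (fWord g w) := by
  intro m
  induction m with
  | zero => intro w _; rw [fWord_zero]; exact continuous_id
  | succ m ih =>
      intro w hw
      rw [fWord_succ]
      exact (hcont (w 0) (w 1) (by simpa using hw 0)).comp (ih _ (adm_tail hw))
-- appended part, tested together with h4
lemma fWord_diam {X : Type*} [MetricSpace X] (g : Fin N → Fin N → X → X)
    {p : Fin N → Fin N → ℝ} (A : Fin N → Set X) (smax D : ℝ)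
    (hs0 : 0 ≤ smax) (hD0 : 0 ≤ D)
    (hcont : ∀ i j, 0 < p i j → Continuous (g i j))
    (hlip : ∀ i j, 0 < p i j → ∀ x y, dist (g i j x) (g i j y) ≤ smax * dist x y)
    (hAc : ∀ j, IsCompact (A j)) (hD : ∀ j, Metric.diam (A j) ≤ D) :
    ∀ (m : ℕ) (w : Fin (m + 1) → Fin N), Adm p w →
      Metric.diam (fWord g w '' A (w (Fin.last m))) ≤ smax ^ m * D := by
  intro m
  induction m with
  | zero =>
      intro w _
      rw [fWord_zero]
      simpa [Fin.last] using hD (w 0)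
  | succ m ih =>
      intro w hw
      rw [fWord_succ, Set.image_comp, ← tail_last w]
      have h01 : 0 < p (w 0) (w 1) := by simpa using hw 0
      set B := fWord g (w ∘ Fin.succ) '' A ((w ∘ Fin.succ) (Fin.last m)) with hB
      have hBc : IsCompact B := ((hAc _).image
        (fWord_continuous g hcont m _ (adm_tail hw)))
      have hBd : Metric.diam B ≤ smax ^ m * D := ih _ (adm_tail hw)
      have : Metric.diam (g (w 0) (w 1) '' B) ≤ smax * Metric.diam B := by
        apply Metric.diam_le_of_forall_dist_le (by positivity)
        rintro x ⟨a, ha, rfl⟩ y ⟨b, hb, rfl⟩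
        calc dist (g (w 0) (w 1) a) (g (w 0) (w 1) b) ≤ smax * dist a b :=
              hlip _ _ h01 a b
          _ ≤ smax * Metric.diam B :=
              mul_le_mul_of_nonneg_left (Metric.dist_le_diam_of_mem hBc.isBounded ha hb) hs0
      calc Metric.diam (g (w 0) (w 1) '' B) ≤ smax * Metric.diam B := this
        _ ≤ smax * (smax ^ m * D) := mul_le_mul_of_nonneg_left hBd hs0
        _ = smax ^ (m + 1) * D := by ring

lemma cover_word {X : Type*} (g : Fin N → Fin N → X → X) {p : Fin N → Fin N → ℝ}
    (E : Fin N → Set X)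
    (hEinv : ∀ i, E i = ⋃ j, ⋃ (_ : 0 < p i j), g i j '' E j) :
    ∀ (n : ℕ) (i : Fin N) (x : X), x ∈ E i →
      ∃ w : Fin (n + 1) → Fin N, Adm p w ∧ w 0 = i ∧
        x ∈ fWord g w '' E (w (Fin.last n)) := by
  intro n
  induction n with
  | zero =>
      intro i x hx
      refine ⟨fun _ => i, fun j => j.elim0, rfl, ?_⟩
      rw [fWord_zero]
      simpa using hx
  | succ n ih =>
      intro i x hx
      rw [hEinv i] at hx
      simp only [Set.mem_iUnion] at hx
      obtain ⟨j, hj, y, hy, rfl⟩ := hx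
      obtain ⟨v, hv, hv0, hvy⟩ := ih j y hy
      refine ⟨Fin.cons i v, adm_cons hv (hv0 ▸ hj), by simp, ?_⟩
      rw [fWord_cons, cons_last, Set.image_comp, hv0]
      exact Set.mem_image_of_mem _ hvy

lemma pow_entry_nonneg {p : Fin N → Fin N → ℝ} (hnn : ∀ i j, 0 ≤ p i j) :
    ∀ (n : ℕ) (i j : Fin N), 0 ≤ ((Matrix.of p) ^ n) i j := by
  intro n
  induction n with
  | zero =>
      intro i j
      rw [pow_zero]
      by_cases h : i = j <;> simp [Matrix.one_apply, h]
  | succ n ih =>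
      intro i j
      rw [pow_succ, Matrix.mul_apply]
      exact Finset.sum_nonneg fun k _ => mul_nonneg (ih i k) (hnn k j)

lemma path_of_pow {p : Fin N → Fin N → ℝ} (hnn : ∀ i j, 0 ≤ p i j) :
    ∀ (n : ℕ) (i j : Fin N), 0 < ((Matrix.of p) ^ n) i j →
      ∃ w : Fin (n + 1) → Fin N, Adm p w ∧ w 0 = i ∧ w (Fin.last n) = j := by
  intro n
  induction n with
  | zero =>
      intro i j h
      rw [pow_zero] at h
      have hij : i = j := by
        by_contra hne
        simp [Matrix.one_apply, hne] at h
      exact ⟨fun _ => i, fun k => k.elim0, rfl, hij⟩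
  | succ n ih =>
      intro i j h
      rw [pow_succ', Matrix.mul_apply] at h
      have : ∃ k, 0 < (Matrix.of p) i k * ((Matrix.of p) ^ n) k j := by
        by_contra hc
        push_neg at hc
        exact absurd (Finset.sum_nonpos fun k _ => hc k) (not_le.mpr h)
      obtain ⟨k, hk⟩ := this
      have h1 : 0 < p i k := by
        rcases lt_or_eq_of_le (hnn i k) with h' | h'
        · exact h'
        · exfalso; rw [show (Matrix.of p) i k = p i k from rfl, ← h'] at hk; simp at hk
      have h2 : 0 < ((Matrix.of p) ^ n) k j := by
        by_contra hc
        push_neg at hc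
        exact absurd hk (not_lt.mpr (mul_nonpos_iff.mpr (Or.inl ⟨le_of_lt h1, hc⟩)))
      obtain ⟨v, hv, hv0, hvl⟩ := ih k j h2
      exact ⟨Fin.cons i v, adm_cons hv (hv0 ▸ h1), by simp, by rw [cons_last, hvl]⟩
lemma extend_path {X : Type*} (g : Fin N → Fin N → X → X) {p : Fin N → Fin N → ℝ}
    (hnn : ∀ i j, 0 ≤ p i j) (E : Fin N → Set X)
    (hstep : ∀ i j, 0 < p i j → g i j '' E j ⊆ E i) (jj : Fin N) :
    ∀ (n : ℕ) (a : ℕ) (w : Fin (a + 1) → Fin N), Adm p w →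
      0 < ((Matrix.of p) ^ n) (w (Fin.last a)) jj →
      ∃ b, b = a + n ∧ ∃ u : Fin (b + 1) → Fin N, Adm p u ∧ u 0 = w 0 ∧
        u (Fin.last b) = jj ∧
        fWord g u '' E jj ⊆ fWord g w '' E (w (Fin.last a)) := by
  intro n
  induction n with
  | zero =>
      intro a w hw hpow
      rw [pow_zero] at hpow
      have hij : w (Fin.last a) = jj := by
        by_contra hne
        simp [Matrix.one_apply, hne] at hpow
      exact ⟨a, rfl, w, hw, rfl, hij, by rw [hij]⟩
  | succ n ih =>
      intro a w hw hpow
      rw [pow_succ', Matrix.mul_apply] at hpow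
      have : ∃ k, 0 < (Matrix.of p) (w (Fin.last a)) k * ((Matrix.of p) ^ n) k jj := by
        by_contra hc
        push_neg at hc
        exact absurd (Finset.sum_nonpos fun k _ => hc k) (not_le.mpr hpow)
      obtain ⟨k, hk⟩ := this
      have h1 : 0 < p (w (Fin.last a)) k := by
        rcases lt_or_eq_of_le (hnn (w (Fin.last a)) k) with h' | h'
        · exact h'
        · exfalso
          rw [show (Matrix.of p) (w (Fin.last a)) k = p (w (Fin.last a)) k from rfl,
            ← h'] at hk
          simp at hk
      have h2 : 0 < ((Matrix.of p) ^ n) k jj := by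
        by_contra hc
        push_neg at hc
        exact absurd hk (not_lt.mpr (mul_nonpos_iff.mpr (Or.inl ⟨le_of_lt h1, hc⟩)))
      have hsl : (Fin.snoc w k : Fin (a + 2) → Fin N) (Fin.last (a + 1)) = k :=
        Fin.snoc_last _ _
      obtain ⟨b, hb, u, hu, hu0, hul, husub⟩ :=
        ih (a + 1) (Fin.snoc w k) (adm_snoc hw h1) (by rw [hsl]; exact h2)
      refine ⟨b, by omega, u, hu, ?_, hul, ?_⟩
      · rw [hu0, snoc_zero' w k]
      · refine husub.trans ?_
        rw [hsl, fWord_snoc, Set.image_comp]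
        exact Set.image_mono (hstep _ _ h1)

lemma disjoint_words {X : Type*} (g : Fin N → Fin N → X → X) {p : Fin N → Fin N → ℝ}
    (U : Fin N → Set X)
    (hUdisj : ∀ i j k l, 0 < p i j → 0 < p k l → (i, j) ≠ (k, l) →
      g i j '' U j ∩ g k l '' U l = ∅)
    (hUnest : ∀ i j, 0 < p i j → g i j '' U j ⊆ U i)
    (hinj : ∀ i j, 0 < p i j → Function.Injective (g i j)) :
    ∀ (m : ℕ) (w τ : Fin (m + 2) → Fin N), Adm p w → Adm p τ → w ≠ τ →
      fWord g w '' U (w (Fin.last (m + 1))) ∩ fWord g τ '' U (τ (Fin.last (m + 1))) = ∅ := by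
  intro m
  induction m with
  | zero =>
      intro w τ hw hτ hne
      have hpair : (w 0, w 1) ≠ (τ 0, τ 1) := by
        intro h
        apply hne
        funext i
        have h0 : w 0 = τ 0 := congrArg Prod.fst h
        have h1 : w 1 = τ 1 := congrArg Prod.snd h
        induction i using Fin.cases with
        | zero => exact h0
        | succ j =>
            rw [Fin.fin_one_eq_zero j]
            simpa using h1
      rw [fWord_succ g w, fWord_succ g τ, fWord_zero, fWord_zero]
      have hl : (Fin.last 1 : Fin 2) = 1 := rfl
      simp only [hl, Function.comp_id]
      exact hUdisj _ _ _ _ (by simpa using hw 0) (by simpa using hτ 0) hpair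
  | succ m ih =>
      intro w τ hw hτ hne
      have hw01 : 0 < p (w 0) (w 1) := by simpa using hw 0
      have hτ01 : 0 < p (τ 0) (τ 1) := by simpa using hτ 0
      have hsubw : fWord g (w ∘ Fin.succ) '' U (w (Fin.last (m + 2))) ⊆ U (w 1) := by
        rw [← tail_last w]
        exact fWord_image_subset g U hUnest (m + 1) _ (adm_tail hw)
      have hsubτ : fWord g (τ ∘ Fin.succ) '' U (τ (Fin.last (m + 2))) ⊆ U (τ 1) := by
        rw [← tail_last τ]
        exact fWord_image_subset g U hUnest (m + 1) _ (adm_tail hτ)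
      by_cases hp : (w 0, w 1) = (τ 0, τ 1)
      · have h0 : w 0 = τ 0 := congrArg Prod.fst hp
        have h1 : w 1 = τ 1 := congrArg Prod.snd hp
        have htne : w ∘ Fin.succ ≠ τ ∘ Fin.succ := by
          intro h
          apply hne
          funext i
          induction i using Fin.cases with
          | zero => exact h0
          | succ j => exact congrFun h j
        have hd := ih (w ∘ Fin.succ) (τ ∘ Fin.succ) (adm_tail hw) (adm_tail hτ) htne
        rw [tail_last, tail_last] at hd
        rw [fWord_succ g w, fWord_succ g τ, Set.image_comp, Set.image_comp, ← h0, ← h1,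
          ← Set.image_inter (hinj _ _ hw01), hd, Set.image_empty]
      · apply Set.eq_empty_of_subset_empty
        have hdisj := hUdisj _ _ _ _ hw01 hτ01 hp
        rw [fWord_succ g w, fWord_succ g τ, Set.image_comp, Set.image_comp]
        calc g (w 0) (w 1) '' (fWord g (w ∘ Fin.succ) '' U (w (Fin.last (m + 2)))) ∩
              g (τ 0) (τ 1) '' (fWord g (τ ∘ Fin.succ) '' U (τ (Fin.last (m + 2))))
            ⊆ g (w 0) (w 1) '' U (w 1) ∩ g (τ 0) (τ 1) '' U (τ 1) :=
              Set.inter_subset_inter (Set.image_mono hsubw) (Set.image_mono hsubτ)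
          _ ⊆ ∅ := hdisj.subset

theorem stmt17 {d : ℕ} {N : ℕ} (hN : 2 ≤ N)
    (p : Fin N → Fin N → ℝ) (s c : Fin N → Fin N → ℝ)
    (hrow : ∀ i, ∑ j, p i j = 1) (hnonneg : ∀ i j, 0 ≤ p i j)
    (hirr : ∀ i j : Fin N, ∃ n : ℕ, 0 < n ∧ 0 < ((Matrix.of p) ^ n) i j)
    (hcs : ∀ i j, 0 < p i j → 0 < c i j ∧ c i j ≤ s i j ∧ s i j < 1)
    (f : Fin N → Fin N → EuclideanSpace ℝ (Fin d) → EuclideanSpace ℝ (Fin d))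
    (hbiLip : ∀ i j, 0 < p i j → ∀ x y,
      c i j * dist x y ≤ dist (f i j x) (f i j y) ∧
      dist (f i j x) (f i j y) ≤ s i j * dist x y)
    (E : Fin N → Set (EuclideanSpace ℝ (Fin d)))
    (hEc : ∀ i, IsCompact (E i)) (hEne : ∀ i, (E i).Nonempty)
    (hEinv : ∀ i, E i = ⋃ j, ⋃ (_ : 0 < p i j), f i j '' E j)
    -- strong open set condition
    (U : Fin N → Set (EuclideanSpace ℝ (Fin d)))
    (hUopen : ∀ i, IsOpen (U i)) (hUne : ∀ i, (U i).Nonempty)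
    (hUbdd : ∀ i, Bornology.IsBounded (U i))
    (hUdisj : ∀ i j k l, 0 < p i j → 0 < p k l → (i, j) ≠ (k, l) →
      f i j '' U j ∩ f k l '' U l = ∅)
    (hUnest : ∀ i j, 0 < p i j → f i j '' U j ⊆ U i)
    (hUE : ∀ i, (E i ∩ U i).Nonempty) :
    ∀ m : ℕ, 1 ≤ m →
      ∃ (σlen : Fin N → ℕ)
        (σ : (i : Fin N) → Fin (σlen i + 1 + 1) → Fin N),
        (∀ i, Adm p (σ i)) ∧
        (∀ i, σ i 0 = i) ∧ (∀ i, σ i (Fin.last (σlen i + 1)) = i) ∧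
        (∀ i, fWord f (σ i) '' E i ⊆ U i) ∧
        ∃ F : Fin N → Set (EuclideanSpace ℝ (Fin d)),
          (∀ i, IsCompact (F i)) ∧ (∀ i, (F i).Nonempty) ∧
          (∀ i, F i ⊆ E i) ∧
          (∀ i, F i = ⋃ w ∈ Finset.univ.filter
              (fun w : Fin (m + 1) → Fin N => Adm p w ∧ w 0 = i),
            (fWord f w ∘ fWord f (σ (w (Fin.last m)))) '' F (w (Fin.last m))) ∧
          (∀ w τ : Fin (m + 1) → Fin N, Adm p w → Adm p τ → w ≠ τ →
            (fWord f w ∘ fWord f (σ (w (Fin.last m)))) '' F (w (Fin.last m)) ∩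
              (fWord f τ ∘ fWord f (σ (τ (Fin.last m)))) '' F (τ (Fin.last m)) = ∅) := by
  intro m hm
  haveI : NeZero N := ⟨by omega⟩
  -- basic consequences
  have hEsub : ∀ i j, 0 < p i j → f i j '' E j ⊆ E i := by
    intro i j hij
    intro x hx
    rw [hEinv i]
    exact Set.mem_iUnion.mpr ⟨j, Set.mem_iUnion.mpr ⟨hij, hx⟩⟩
  have hinj : ∀ i j, 0 < p i j → Function.Injective (f i j) := by
    intro i j hij a b hab
    have h1 := (hbiLip i j hij a b).1
    rw [hab, dist_self] at h1
    have hc := (hcs i j hij).1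
    have hd : (0:ℝ) ≤ dist a b := dist_nonneg
    have : dist a b ≤ 0 := by nlinarith
    exact dist_le_zero.mp this
  have hs_nonneg : ∀ i j, 0 < p i j → 0 ≤ s i j := fun i j hij =>
    le_trans (le_of_lt (hcs i j hij).1) (hcs i j hij).2.1
  have hcont : ∀ i j, 0 < p i j → Continuous (f i j) := by
    intro i j hij
    exact (LipschitzWith.of_dist_le_mul (K := ⟨s i j, hs_nonneg i j hij⟩)
      (fun x y => (hbiLip i j hij x y).2)).continuous
  -- the maximal contraction ratio and diameter bound
  have hrowpos : ∀ i, ∃ j, 0 < p i j := by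
    intro i
    by_contra hc
    push_neg at hc
    have hz : ∑ j, p i j = 0 :=
      Finset.sum_eq_zero fun j _ => le_antisymm (hc j) (hnonneg i j)
    rw [hrow i] at hz
    exact one_ne_zero hz
  set Pfin : Finset (Fin N × Fin N) :=
    Finset.univ.filter (fun q : Fin N × Fin N => 0 < p q.1 q.2) with hPfin
  have hPne : Pfin.Nonempty := by
    obtain ⟨j, hj⟩ := hrowpos 0
    exact ⟨(0, j), by simp [hPfin, hj]⟩
  set smax : ℝ := Pfin.sup' hPne (fun q => s q.1 q.2) with hsmax
  have hsle : ∀ i j, 0 < p i j → s i j ≤ smax := by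
    intro i j hij
    exact Finset.le_sup' (f := fun q : Fin N × Fin N => s q.1 q.2)
      (by simp [hPfin, hij] : ((i, j) : Fin N × Fin N) ∈ Pfin)
  have hs0 : 0 ≤ smax := by
    obtain ⟨j, hj⟩ := hrowpos 0
    exact le_trans (hs_nonneg 0 j hj) (hsle 0 j hj)
  have hs1 : smax < 1 := by
    rw [hsmax, Finset.sup'_lt_iff]
    intro q hq
    have hq' : 0 < p q.1 q.2 := by
      rw [hPfin] at hq
      simpa using (Finset.mem_filter.mp hq).2
    exact (hcs q.1 q.2 hq').2.2
  set D : ℝ := Finset.univ.sup' Finset.univ_nonempty (fun j => Metric.diam (E j)) with hDdef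
  have hD : ∀ j, Metric.diam (E j) ≤ D := fun j =>
    Finset.le_sup' (f := fun j => Metric.diam (E j)) (Finset.mem_univ j)
  have hD0 : 0 ≤ D := le_trans Metric.diam_nonneg (hD 0)
  have huni : ∀ i j, 0 < p i j → ∀ x y, dist (f i j x) (f i j y) ≤ smax * dist x y :=
    fun i j hij x y => le_trans (hbiLip i j hij x y).2
      (mul_le_mul_of_nonneg_right (hsle i j hij) dist_nonneg)
  -- construction of the loops σ
  have hσex : ∀ i : Fin N, ∃ L : ℕ, ∃ u : Fin (L + 1 + 1) → Fin N,
      Adm p u ∧ u 0 = i ∧ u (Fin.last (L + 1)) = i ∧ fWord f u '' E i ⊆ U i := by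
    intro i
    obtain ⟨x, hxE, hxU⟩ := hUE i
    obtain ⟨ε, hε, hball⟩ := Metric.isOpen_iff.mp (hUopen i) x hxU
    obtain ⟨n, hn⟩ := exists_pow_lt_of_lt_one (show (0:ℝ) < ε / (D + 1) by positivity) hs1
    have hsmD : smax ^ n * D < ε := by
      have hp0 : (0:ℝ) ≤ smax ^ n := pow_nonneg hs0 n
      have h1 : smax ^ n * D ≤ smax ^ n * (D + 1) := by nlinarith
      have h2 : smax ^ n * (D + 1) < (ε / (D + 1)) * (D + 1) :=
        mul_lt_mul_of_pos_right hn (by positivity)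
      rw [div_mul_cancel₀ _ (by positivity : (D:ℝ) + 1 ≠ 0)] at h2
      linarith
    obtain ⟨w, hwadm, hw0, hwx⟩ := cover_word f E hEinv n i x hxE
    have hdw : Metric.diam (fWord f w '' E (w (Fin.last n))) ≤ smax ^ n * D :=
      fWord_diam f E smax D hs0 hD0 hcont huni hEc hD n w hwadm
    have hwbdd : Bornology.IsBounded (fWord f w '' E (w (Fin.last n))) :=
      ((hEc _).image (fWord_continuous f hcont n w hwadm)).isBounded
    have hwU : fWord f w '' E (w (Fin.last n)) ⊆ U i := by
      intro y hy
      apply hball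
      have hd : dist y x ≤ smax ^ n * D :=
        le_trans (Metric.dist_le_diam_of_mem hwbdd hy hwx) hdw
      exact Metric.mem_ball.mpr (lt_of_le_of_lt hd hsmD)
    obtain ⟨n', hn'pos, hn'⟩ := hirr (w (Fin.last n)) i
    obtain ⟨b, hb, u, hu, hu0, hul, husub⟩ :=
      extend_path f hnonneg E hEsub i n' n w hwadm hn'
    obtain ⟨L, rfl⟩ : ∃ L, b = L + 1 := ⟨b - 1, by omega⟩
    exact ⟨L, u, hu, by rw [hu0, hw0], hul, husub.trans hwU⟩
  choose σlen σ hσadm hσ0 hσlast hσU using hσex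
  refine ⟨σlen, σ, hσadm, hσ0, hσlast, hσU, ?_⟩
  -- the new maps and the limit sets
  have hσE : ∀ j, fWord f (σ j) '' E j ⊆ E j := by
    intro j
    have h := fWord_image_subset f E hEsub (σlen j + 1) (σ j) (hσadm j)
    rwa [hσlast j, hσ0 j] at h
  set gm : (Fin (m + 1) → Fin N) → EuclideanSpace ℝ (Fin d) → EuclideanSpace ℝ (Fin d) :=
    fun w => fWord f w ∘ fWord f (σ (w (Fin.last m))) with hgm
  set W : Fin N → Finset (Fin (m + 1) → Fin N) :=
    fun i => Finset.univ.filter (fun w : Fin (m + 1) → Fin N => Adm p w ∧ w 0 = i) with hWdef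
  set Φ : (Fin N → Set (EuclideanSpace ℝ (Fin d))) → Fin N → Set (EuclideanSpace ℝ (Fin d)) :=
    fun A i => ⋃ w ∈ W i, gm w '' A (w (Fin.last m)) with hΦdef
  have hWmem : ∀ (i : Fin N) (w : Fin (m + 1) → Fin N), w ∈ W i ↔ Adm p w ∧ w 0 = i := by
    intro i w
    simp [hWdef]
  have hgmE : ∀ w : Fin (m + 1) → Fin N, Adm p w →
      gm w '' E (w (Fin.last m)) ⊆ E (w 0) := by
    intro w hw
    rw [show gm w = fWord f w ∘ fWord f (σ (w (Fin.last m))) from rfl, Set.image_comp]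
    exact (Set.image_mono (hσE _)).trans (fWord_image_subset f E hEsub m w hw)
  have hgmcont : ∀ w : Fin (m + 1) → Fin N, Adm p w → Continuous (gm w) :=
    fun w hw => (fWord_continuous f hcont m w hw).comp
      (fWord_continuous f hcont _ _ (hσadm _))
  have hgminj : ∀ w : Fin (m + 1) → Fin N, Adm p w → Function.Injective (gm w) :=
    fun w hw => (fWord_injective f hinj m w hw).comp
      (fWord_injective f hinj _ _ (hσadm _))
  set T : ℕ → Fin N → Set (EuclideanSpace ℝ (Fin d)) := fun n => Φ^[n] E with hTdef
  have hT0 : T 0 = E := rfl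
  have hTsucc : ∀ n, T (n + 1) = Φ (T n) := fun n => Function.iterate_succ_apply' Φ n E
  have hΦsubE : ∀ (A : Fin N → Set (EuclideanSpace ℝ (Fin d))),
      (∀ j, A j ⊆ E j) → ∀ i, Φ A i ⊆ E i := by
    intro A hA i x hx
    rw [hΦdef] at hx
    simp only [Set.mem_iUnion] at hx
    obtain ⟨w, hwW, hxw⟩ := hx
    obtain ⟨hwadm, hw0⟩ := (hWmem i w).mp hwW
    have hx' : x ∈ gm w '' E (w (Fin.last m)) := Set.image_mono (hA _) hxw
    rw [← hw0]
    exact hgmE w hwadm hx'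
  have hΦmono : ∀ (A B : Fin N → Set (EuclideanSpace ℝ (Fin d))),
      (∀ j, A j ⊆ B j) → ∀ i, Φ A i ⊆ Φ B i := by
    intro A B hAB i
    rw [hΦdef]
    exact Set.iUnion₂_mono fun w _ => Set.image_mono (hAB _)
  have hTE : ∀ n i, T n i ⊆ E i := by
    intro n
    induction n with
    | zero => exact fun i => subset_rfl
    | succ n ih =>
        intro i
        rw [hTsucc n]
        exact hΦsubE (T n) ih i
  have hTdec : ∀ n i, T (n + 1) i ⊆ T n i := by
    intro n
    induction n with
    | zero =>
        intro i
        rw [hTsucc 0]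
        exact hΦsubE E (fun j => subset_rfl) i
    | succ n ih =>
        intro i
        rw [hTsucc (n + 1)]
        exact (hΦmono _ _ ih i).trans (congrFun (hTsucc n) i).symm.subset
  have hTanti : ∀ i : Fin N, Antitone (fun n => T n i) :=
    fun i => antitone_nat_of_succ_le (fun n => hTdec n i)
  have hWne : ∀ i, ∃ w, w ∈ W i := by
    intro i
    obtain ⟨x, hx⟩ := hEne i
    obtain ⟨w, hwadm, hw0, _⟩ := cover_word f E hEinv m i x hx
    exact ⟨w, (hWmem i w).mpr ⟨hwadm, hw0⟩⟩
  have hTc : ∀ n i, IsCompact (T n i) := by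
    intro n
    induction n with
    | zero => exact hEc
    | succ n ih =>
        intro i
        rw [hTsucc n, hΦdef]
        apply (W i).isCompact_biUnion
        intro w hwW
        obtain ⟨hwadm, _⟩ := (hWmem i w).mp hwW
        exact (ih _).image (hgmcont w hwadm)
  have hTne : ∀ n i, (T n i).Nonempty := by
    intro n
    induction n with
    | zero => exact hEne
    | succ n ih =>
        intro i
        obtain ⟨w, hwW⟩ := hWne i
        obtain ⟨y, hy⟩ := ih (w (Fin.last m))
        rw [hTsucc n, hΦdef]
        refine ⟨gm w y, ?_⟩
        simp only [Set.mem_iUnion]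
        exact ⟨w, hwW, Set.mem_image_of_mem _ hy⟩
  refine ⟨fun i => ⋂ n, T n i, ?_, ?_, ?_, ?_, ?_⟩
  · exact fun i => (hTc 0 i).of_isClosed_subset
      (isClosed_iInter fun n => (hTc n i).isClosed) (Set.iInter_subset _ 0)
  · exact fun i => IsCompact.nonempty_iInter_of_sequence_nonempty_isCompact_isClosed
      (fun n => T n i) (fun n => hTdec n i) (fun n => hTne n i) (hTc 0 i)
      (fun n => (hTc n i).isClosed)
  · exact fun i => Set.iInter_subset (fun n => T n i) 0
  · -- the invariance equation
    intro i
    apply Set.Subset.antisymm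
    · intro x hx
      have hxn : ∀ n, x ∈ T n i := Set.mem_iInter.mp hx
      have hSne : ∀ n, ∃ w, w ∈ (W i).filter
          (fun w => x ∈ gm w '' T n (w (Fin.last m))) := by
        intro n
        have hx' := hxn (n + 1)
        rw [hTsucc n, hΦdef] at hx'
        simp only [Set.mem_iUnion] at hx'
        obtain ⟨w, hwW, hxw⟩ := hx'
        exact ⟨w, Finset.mem_filter.mpr ⟨hwW, hxw⟩⟩
      choose wn hwn using hSne
      obtain ⟨w, hwfib⟩ := Finite.exists_infinite_fiber wn
      have hfib : (wn ⁻¹' {w}).Infinite := Set.infinite_coe_iff.mp hwfib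
      have hxall : ∀ n, x ∈ gm w '' T n (w (Fin.last m)) := by
        intro n
        obtain ⟨n', hn'mem, hn'gt⟩ := hfib.exists_gt n
        have hw' : wn n' = w := hn'mem
        have h1 := hwn n'
        rw [hw'] at h1
        have hx' : x ∈ gm w '' T n' (w (Fin.last m)) := (Finset.mem_filter.mp h1).2
        exact Set.image_mono (hTanti (w (Fin.last m)) (le_of_lt hn'gt)) hx'
      have hwW : w ∈ W i := by
        obtain ⟨n₀, hn₀⟩ := hfib.nonempty
        have hw0 : wn n₀ = w := hn₀
        rw [← hw0]
        exact (Finset.mem_filter.mp (hwn n₀)).1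
      obtain ⟨hwadm, hw0⟩ := (hWmem i w).mp hwW
      obtain ⟨y, hy0, hxy⟩ := hxall 0
      have hyall : ∀ n, y ∈ T n (w (Fin.last m)) := by
        intro n
        obtain ⟨z, hz, hzx⟩ := hxall n
        have hzy : z = y := hgminj w hwadm (hzx.trans hxy.symm)
        rwa [hzy] at hz
      simp only [Set.mem_iUnion]
      refine ⟨w, (hWmem i w).mpr ⟨hwadm, hw0⟩, y, Set.mem_iInter.mpr hyall, hxy⟩
    · intro x hx
      simp only [Set.mem_iUnion] at hx
      obtain ⟨w, hwW, y, hyF, hxy⟩ := hx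
      rw [Finset.mem_filter] at hwW
      obtain ⟨_, hwadm, hw0⟩ := hwW
      have hyn : ∀ n, y ∈ T n (w (Fin.last m)) := Set.mem_iInter.mp hyF
      apply Set.mem_iInter.mpr
      intro n
      cases n with
      | zero =>
          rw [show T 0 i = E i from rfl, ← hw0]
          exact hgmE w hwadm ⟨y, hTE 0 _ (hyn 0), hxy⟩
      | succ n =>
          rw [hTsucc n, hΦdef]
          simp only [Set.mem_iUnion]
          exact ⟨w, (hWmem i w).mpr ⟨hwadm, hw0⟩, y, hyn n, hxy⟩
  · -- disjointness
    intro w τ hwa hτa hne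
    obtain ⟨m', rfl⟩ : ∃ m', m = m' + 1 := ⟨m - 1, by omega⟩
    have hFE : ∀ j, (⋂ n, T n j) ⊆ E j := fun j => Set.iInter_subset (fun n => T n j) 0
    have hsub1 : (fWord f w ∘ fWord f (σ (w (Fin.last (m' + 1))))) ''
        (⋂ n, T n (w (Fin.last (m' + 1)))) ⊆ fWord f w '' U (w (Fin.last (m' + 1))) := by
      rw [Set.image_comp]
      exact Set.image_mono ((Set.image_mono (hFE _)).trans (hσU _))
    have hsub2 : (fWord f τ ∘ fWord f (σ (τ (Fin.last (m' + 1))))) ''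
        (⋂ n, T n (τ (Fin.last (m' + 1)))) ⊆ fWord f τ '' U (τ (Fin.last (m' + 1))) := by
      rw [Set.image_comp]
      exact Set.image_mono ((Set.image_mono (hFE _)).trans (hσU _))
    exact Set.eq_empty_of_subset_empty ((Set.inter_subset_inter hsub1 hsub2).trans
      (disjoint_words f U hUdisj hUnest hinj m' w τ hwa hτa hne).subset)
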